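/- arXiv:2311.00347 — 2 statements merged into one kernel-verified Lean document; each statement's English description precedes it below -/
import Mathlib

section
/- Let k ∈ W^{1,1}(0,T), H ∈ C¹(ℝ), and u ∈ L¹(0,T) such that H(u), H'(u)u, and H'(u)(k'*u) belong to L¹(0,T). Then for almost all t ∈ (0,T): H'(u(t)) d/dt (k*u)(t) = d/dt (k*H(u))(t) + (H'(u(t))u(t) − H(u(t)))k(t) + ∫₀^t [H(u(t−s)) − H(u(t)) − H'(u(t))(u(t−s) − u(t))](−k'(s)) ds, where (k*v)(t) = ∫₀^t k(t−τ)v(τ)dτ. -/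
open MeasureTheory intervalIntegral

/-- Convolution on the positive half-line: `(k*v)(t) = ∫₀^t k(t-τ) v(τ) dτ`. -/
noncomputable def halfConv (k v : ℝ → ℝ) (t : ℝ) : ℝ := ∫ τ in (0:ℝ)..t, k (t - τ) * v τ

open Metric Filter

lemma ae_lebesgue_pt (g : ℝ → ℝ) (hg : Integrable g) :
    ∀ᵐ x ∂(volume : Measure ℝ), Tendsto (fun r => ⨍ y in closedBall x r, ‖g y - g x‖)
      (nhdsWithin 0 (Set.Ioi 0)) (nhds 0) := by
  filter_upwards [IsUnifLocDoublingMeasure.ae_tendsto_average_norm_sub volume hg.locallyIntegrable 1] with x hx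
  exact hx (fun _ => x) id tendsto_id (by
    filter_upwards [self_mem_nhdsWithin] with j (hj : 0 < j)
    simpa using hj.le)

lemma ae_hasDerivAt_primitive (g : ℝ → ℝ) (hg : Integrable g) :
    ∀ᵐ x ∂(volume : Measure ℝ),
      HasDerivAt (fun y => ∫ t in (0:ℝ)..y, g t) (g x) x := by
  filter_upwards [ae_lebesgue_pt g hg] with x hx
  rw [hasDerivAt_iff_isLittleO]
  rw [Asymptotics.isLittleO_iff]
  intro c hc
  have h2 : ∀ᶠ r in nhdsWithin (0:ℝ) (Set.Ioi 0),
      (⨍ y in closedBall x r, ‖g y - g x‖) < c / 2 := by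
    exact hx.eventually_lt_const (by positivity)
  rw [eventually_nhdsWithin_iff, Metric.eventually_nhds_iff] at h2
  obtain ⟨δ, hδ, hδ2⟩ := h2
  have : ∀ᶠ y in nhds x, |y - x| < δ := by
    have := Metric.ball_mem_nhds x hδ
    filter_upwards [this] with y hy
    simpa [Real.dist_eq] using hy
  filter_upwards [this] with y hy
  rcases eq_or_ne y x with rfl | hne
  · simp
  · set r := |y - x| with hr
    have hr0 : 0 < r := abs_pos.mpr (sub_ne_zero.mpr hne)
    have havg : (⨍ t in closedBall x r, ‖g t - g x‖) < c / 2 := by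
      apply hδ2
      · rw [Real.dist_eq, sub_zero, abs_of_pos hr0]; simpa [Real.dist_eq] using hy
      · exact hr0
    have hint : IntegrableOn (fun t => ‖g t - g x‖) (closedBall x r) :=
      (hg.integrableOn.sub (integrableOn_const measure_closedBall_lt_top.ne)).norm
    have key : (∫ t in (0:ℝ)..y, g t) - (∫ t in (0:ℝ)..x, g t) = ∫ t in x..y, g t :=
      (integral_interval_sub_left hg.intervalIntegrable hg.intervalIntegrable)
    have hconst : ∫ t in x..y, (fun _ => g x) t = (y - x) • g x := by
      simp [intervalIntegral.integral_const, smul_eq_mul]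
    have hsub : (∫ t in (0:ℝ)..y, g t) - (∫ t in (0:ℝ)..x, g t) - (y - x) • g x
        = ∫ t in x..y, (g t - g x) := by
      rw [key, ← hconst, ← intervalIntegral.integral_sub hg.intervalIntegrable
        (intervalIntegrable_const)]
    rw [hsub]
    have h1 : ‖∫ t in x..y, (g t - g x)‖ ≤ ∫ t in Set.uIoc x y, ‖g t - g x‖ :=
      intervalIntegral.norm_integral_le_integral_norm_uIoc
    have hsubset : Set.uIoc x y ⊆ closedBall x r := by
      intro t ht
      rw [Set.mem_uIoc] at ht
      rw [mem_closedBall, Real.dist_eq]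
      rcases ht with ⟨h1', h2'⟩ | ⟨h1', h2'⟩
      · rw [abs_le]; constructor <;> [linarith [neg_abs_le (y - x)]; linarith [le_abs_self (y - x)]]
      · rw [abs_le]; constructor <;> [linarith [neg_abs_le (y - x)]; linarith [le_abs_self (y - x)]]
    have h2' : ∫ t in Set.uIoc x y, ‖g t - g x‖ ≤ ∫ t in closedBall x r, ‖g t - g x‖ := by
      apply setIntegral_mono_set hint
      · filter_upwards with t using norm_nonneg _
      · exact HasSubset.Subset.eventuallyLE hsubset
    have hvol : (volume (closedBall x r)).toReal = 2 * r := by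
      rw [Real.volume_closedBall]
      exact ENNReal.toReal_ofReal (by positivity)
    have h3 : ∫ t in closedBall x r, ‖g t - g x‖
        = (2 * r) * ⨍ t in closedBall x r, ‖g t - g x‖ := by
      rw [setAverage_eq, smul_eq_mul, measureReal_def, hvol]
      field_simp
    have : ‖∫ t in x..y, (g t - g x)‖ ≤ (2 * r) * (c / 2) := by
      refine h1.trans (h2'.trans ?_)
      rw [h3]
      have h4 : (0:ℝ) ≤ 2 * r := by positivity
      exact mul_le_mul_of_nonneg_left havg.le h4
    calc ‖∫ t in x..y, (g t - g x)‖ ≤ (2 * r) * (c / 2) := this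
      _ = c * r := by ring
      _ = c * ‖y - x‖ := by rw [Real.norm_eq_abs]

noncomputable def shearEquiv : (ℝ × ℝ) ≃ᵐ (ℝ × ℝ) where
  toFun := fun p => (p.2, p.1 - p.2)
  invFun := fun q => (q.1 + q.2, q.1)
  left_inv := fun p => by simp
  right_inv := fun q => by simp
  measurable_toFun := measurable_snd.prodMk (measurable_fst.sub measurable_snd)
  measurable_invFun := (measurable_fst.add measurable_snd).prodMk measurable_fst

lemma conv_fubini (kE vE : ℝ → ℝ) (hkE : Integrable kE) (hvE : Integrable vE) (t : ℝ) :
    ((∫ τ in Set.Ioo 0 t, vE τ * ∫ σ in Set.Ioo 0 (t - τ), kE σ)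
      = ∫ r in Set.Ioo 0 t, ∫ τ in Set.Ioo 0 r, vE τ * kE (r - τ))
  ∧ IntegrableOn (fun r => ∫ τ in Set.Ioo 0 r, vE τ * kE (r - τ)) (Set.Ioo 0 t)
  ∧ (∀ᵐ r ∂(volume.restrict (Set.Ioo 0 t)),
      IntegrableOn (fun τ => vE τ * kE (r - τ)) (Set.Ioo 0 r))
  ∧ IntegrableOn (fun τ => vE τ * ∫ σ in Set.Ioo 0 (t - τ), kE σ) (Set.Ioo 0 t) := by
  set S : Set (ℝ × ℝ) := {q | 0 < q.1 ∧ 0 < q.2 ∧ q.1 + q.2 < t} with hSdef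
  have hS : MeasurableSet S := by
    have : S = {q : ℝ × ℝ | 0 < q.1} ∩ ({q | 0 < q.2} ∩ {q | q.1 + q.2 < t}) := by
      ext q; simp [hSdef, Set.mem_setOf_eq, Set.mem_inter_iff, and_assoc]
    rw [this]
    exact (measurableSet_lt measurable_const measurable_fst).inter
      ((measurableSet_lt measurable_const measurable_snd).inter
        (measurableSet_lt (measurable_fst.add measurable_snd) measurable_const))
  set F : ℝ × ℝ → ℝ := S.indicator (fun q => vE q.1 * kE q.2) with hFdef
  have hF : Integrable F (volume.prod volume) := (hvE.mul_prod hkE).indicator hS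
  have hmp : MeasurePreserving (fun z : ℝ × ℝ => (z.2, z.1 - z.2))
      ((volume : Measure ℝ).prod volume) ((volume : Measure ℝ).prod volume) :=
    measurePreserving_prod_sub_swap volume volume
  have hcoe : ⇑shearEquiv = fun z : ℝ × ℝ => (z.2, z.1 - z.2) := rfl
  have hint : (∫ p, F (shearEquiv p) ∂((volume : Measure ℝ).prod volume))
      = ∫ p, F p ∂((volume : Measure ℝ).prod volume) := by
    rw [hcoe]
    exact hmp.integral_comp shearEquiv.measurableEmbedding F
  have hG : Integrable (fun p => F (shearEquiv p)) ((volume : Measure ℝ).prod volume) := by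
    rw [hcoe]
    exact (hmp.integrable_comp_emb shearEquiv.measurableEmbedding).mpr hF
  -- inner integral for F
  have h1 : ∀ τ : ℝ, (∫ σ, F (τ, σ)) = (Set.Ioo 0 t).indicator
      (fun τ => vE τ * ∫ σ in Set.Ioo 0 (t - τ), kE σ) τ := by
    intro τ
    by_cases hτ : τ ∈ Set.Ioo 0 t
    · have hfun : (fun σ => F (τ, σ)) = (Set.Ioo 0 (t - τ)).indicator (fun σ => vE τ * kE σ) := by
        funext σ
        by_cases hσ : σ ∈ Set.Ioo 0 (t - τ)
        · rw [Set.indicator_of_mem hσ]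
          have : (τ, σ) ∈ S := by
            have ha : (0:ℝ) < τ := hτ.1
            have hb : (0:ℝ) < σ := hσ.1
            have hc : τ + σ < t := by have := hσ.2; linarith
            exact ⟨ha, hb, hc⟩
          rw [hFdef, Set.indicator_of_mem this]
        · have : (τ, σ) ∉ S := by
            intro hmem
            exact hσ ⟨hmem.2.1, by have := hmem.2.2; linarith⟩
          rw [hFdef, Set.indicator_of_notMem this, Set.indicator_of_notMem hσ]
      rw [hfun, MeasureTheory.integral_indicator measurableSet_Ioo, MeasureTheory.integral_const_mul,
        Set.indicator_of_mem hτ]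
    · have hfun : (fun σ => F (τ, σ)) = fun _ => 0 := by
        funext σ
        have : (τ, σ) ∉ S := by
          intro hmem
          have ha : (0:ℝ) < τ := hmem.1
          have hb : (0:ℝ) < σ := hmem.2.1
          have hc : τ + σ < t := hmem.2.2
          simp only [Set.mem_Ioo, not_and, not_lt] at hτ
          have := hτ ha
          linarith
        rw [hFdef, Set.indicator_of_notMem this]
      rw [hfun, MeasureTheory.integral_zero, Set.indicator_of_notMem hτ]
  -- inner integral for G
  have h2 : ∀ r : ℝ, (∫ τ, F (shearEquiv (r, τ))) = (Set.Ioo 0 t).indicator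
      (fun r => ∫ τ in Set.Ioo 0 r, vE τ * kE (r - τ)) r := by
    intro r
    by_cases hr : r ∈ Set.Ioo 0 t
    · have hfun : (fun τ => F (shearEquiv (r, τ)))
          = (Set.Ioo 0 r).indicator (fun τ => vE τ * kE (r - τ)) := by
        funext τ
        by_cases hτ : τ ∈ Set.Ioo 0 r
        · rw [Set.indicator_of_mem hτ]
          have : (τ, r - τ) ∈ S := by
            have ha : (0:ℝ) < τ := hτ.1
            have hb : (0:ℝ) < r - τ := by have := hτ.2; linarith
            have hc : τ + (r - τ) < t := by have := hr.2; linarith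
            exact ⟨ha, hb, hc⟩
          show F (τ, r - τ) = _
          rw [hFdef, Set.indicator_of_mem this]
        · have : (τ, r - τ) ∉ S := by
            intro hmem
            have ha : (0:ℝ) < τ := hmem.1
            have hb : (0:ℝ) < r - τ := hmem.2.1
            exact hτ ⟨ha, by linarith⟩
          show F (τ, r - τ) = _
          rw [hFdef, Set.indicator_of_notMem this, Set.indicator_of_notMem hτ]
      rw [hfun, MeasureTheory.integral_indicator measurableSet_Ioo, Set.indicator_of_mem hr]
    · have hfun : (fun τ => F (shearEquiv (r, τ))) = fun _ => 0 := by
        funext τ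
        have : (τ, r - τ) ∉ S := by
          intro hmem
          have ha : (0:ℝ) < τ := hmem.1
          have hb : (0:ℝ) < r - τ := hmem.2.1
          have hc : τ + (r - τ) < t := hmem.2.2
          simp only [Set.mem_Ioo, not_and, not_lt] at hr
          have h0r : 0 < r := by linarith
          have := hr h0r
          linarith
        show F (τ, r - τ) = 0
        rw [hFdef, Set.indicator_of_notMem this]
      rw [hfun, MeasureTheory.integral_zero, Set.indicator_of_notMem hr]
  have hFiter : (∫ p, F p ∂((volume : Measure ℝ).prod volume))
      = ∫ τ in Set.Ioo 0 t, vE τ * ∫ σ in Set.Ioo 0 (t - τ), kE σ := by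
    rw [MeasureTheory.integral_prod F hF]
    simp_rw [h1]
    rw [MeasureTheory.integral_indicator measurableSet_Ioo]
  have hGiter : (∫ p, F (shearEquiv p) ∂((volume : Measure ℝ).prod volume))
      = ∫ r in Set.Ioo 0 t, ∫ τ in Set.Ioo 0 r, vE τ * kE (r - τ) := by
    rw [MeasureTheory.integral_prod _ hG]
    simp_rw [h2]
    rw [MeasureTheory.integral_indicator measurableSet_Ioo]
  refine ⟨by rw [← hFiter, ← hint, hGiter], ?_, ?_, ?_⟩
  · have := hG.integral_prod_left
    have heq : (fun r => ∫ τ, F (shearEquiv (r, τ)))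
        = (Set.Ioo 0 t).indicator (fun r => ∫ τ in Set.Ioo 0 r, vE τ * kE (r - τ)) := funext h2
    rw [heq] at this
    exact (integrable_indicator_iff measurableSet_Ioo).mp this
  · filter_upwards [ae_restrict_of_ae hG.prod_right_ae, ae_restrict_mem measurableSet_Ioo]
      with r h1' h2'
    have hfun : (fun τ => F (shearEquiv (r, τ)))
        = (Set.Ioo 0 r).indicator (fun τ => vE τ * kE (r - τ)) := by
      funext τ
      by_cases hτ : τ ∈ Set.Ioo 0 r
      · rw [Set.indicator_of_mem hτ]
        have : (τ, r - τ) ∈ S := by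
          have ha : (0:ℝ) < τ := hτ.1
          have hb : (0:ℝ) < r - τ := by have := hτ.2; linarith
          have hc : τ + (r - τ) < t := by have := h2'.2; linarith
          exact ⟨ha, hb, hc⟩
        show F (τ, r - τ) = _
        rw [hFdef, Set.indicator_of_mem this]
      · have : (τ, r - τ) ∉ S := by
          intro hmem
          have ha : (0:ℝ) < τ := hmem.1
          have hb : (0:ℝ) < r - τ := hmem.2.1
          exact hτ ⟨ha, by linarith⟩
        show F (τ, r - τ) = _
        rw [hFdef, Set.indicator_of_notMem this, Set.indicator_of_notMem hτ]
    rw [hfun] at h1'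
    exact (integrable_indicator_iff measurableSet_Ioo).mp h1'
  · have := hF.integral_prod_left
    have heq : (fun τ => ∫ σ, F (τ, σ))
        = (Set.Ioo 0 t).indicator (fun τ => vE τ * ∫ σ in Set.Ioo 0 (t - τ), kE σ) := funext h1
    rw [heq] at this
    exact (integrable_indicator_iff measurableSet_Ioo).mp this

set_option maxHeartbeats 1000000 in

lemma halfConv_eq_primitive (T : ℝ) (hT : 0 < T) (k kE : ℝ → ℝ) (k0 : ℝ)
    (hkE : Integrable kE)
    (hkftc : ∀ s ∈ Set.Ioo 0 T, k s = k0 + ∫ σ in Set.Ioo 0 s, kE σ)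
    (vE : ℝ → ℝ) (hvE : Integrable vE) (v : ℝ → ℝ)
    (hveq : ∀ x ∈ Set.Ioo 0 T, vE x = v x)
    {t : ℝ} (ht : t ∈ Set.Ioo 0 T) :
    halfConv k v t = ∫ x in (0:ℝ)..t,
      (Set.Ioo 0 T).indicator
        (fun r => k0 * vE r + ∫ τ in Set.Ioo 0 r, vE τ * kE (r - τ)) x := by
  have hfub := conv_fubini kE vE hkE hvE t
  have hfubT := conv_fubini kE vE hkE hvE T
  have hsub : Set.Ioo (0:ℝ) t ⊆ Set.Ioo 0 T := Set.Ioo_subset_Ioo le_rfl ht.2.le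
  have hRHS : (∫ x in (0:ℝ)..t, (Set.Ioo 0 T).indicator
        (fun r => k0 * vE r + ∫ τ in Set.Ioo 0 r, vE τ * kE (r - τ)) x)
      = ∫ x in Set.Ioo 0 t, (k0 * vE x + ∫ τ in Set.Ioo 0 x, vE τ * kE (x - τ)) := by
    rw [intervalIntegral.integral_of_le ht.1.le, integral_Ioc_eq_integral_Ioo]
    exact setIntegral_congr_fun measurableSet_Ioo fun x hx =>
      Set.indicator_of_mem (hsub hx) _
  rw [hRHS, halfConv, intervalIntegral.integral_of_le ht.1.le, integral_Ioc_eq_integral_Ioo]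
  have hcongr : ∀ τ ∈ Set.Ioo (0:ℝ) t,
      k (t - τ) * v τ = k0 * vE τ + vE τ * ∫ σ in Set.Ioo 0 (t - τ), kE σ := by
    intro τ hτ
    have htτ : t - τ ∈ Set.Ioo 0 T := ⟨by have := hτ.2; linarith, by
      have := hτ.1; have := ht.2; linarith⟩
    rw [hkftc _ htτ, hveq _ (hsub hτ)]
    ring
  rw [setIntegral_congr_fun measurableSet_Ioo hcongr]
  have hadd1 : (∫ τ in Set.Ioo 0 t, (k0 * vE τ + vE τ * ∫ σ in Set.Ioo 0 (t - τ), kE σ))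
      = (∫ τ in Set.Ioo 0 t, k0 * vE τ)
        + ∫ τ in Set.Ioo 0 t, vE τ * ∫ σ in Set.Ioo 0 (t - τ), kE σ :=
    MeasureTheory.integral_add ((hvE.integrableOn).const_mul k0) hfub.2.2.2
  have hadd2 : (∫ x in Set.Ioo 0 t, (k0 * vE x + ∫ τ in Set.Ioo 0 x, vE τ * kE (x - τ)))
      = (∫ x in Set.Ioo 0 t, k0 * vE x)
        + ∫ x in Set.Ioo 0 t, ∫ τ in Set.Ioo 0 x, vE τ * kE (x - τ) :=
    MeasureTheory.integral_add ((hvE.integrableOn).const_mul k0) (hfubT.2.1.mono_set hsub)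
  rw [hadd1, hadd2, hfub.1]

lemma halfConv_deriv_ae (T : ℝ) (hT : 0 < T) (k kE : ℝ → ℝ) (k0 : ℝ)
    (hkE : Integrable kE)
    (hkftc : ∀ s ∈ Set.Ioo 0 T, k s = k0 + ∫ σ in Set.Ioo 0 s, kE σ)
    (vE : ℝ → ℝ) (hvE : Integrable vE) (v : ℝ → ℝ)
    (hveq : ∀ x ∈ Set.Ioo 0 T, vE x = v x) :
    ∀ᵐ t ∂(volume.restrict (Set.Ioo 0 T)),
      deriv (halfConv k v) t
        = k0 * v t + ∫ τ in Set.Ioo 0 t, vE τ * kE (t - τ) := by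
  have hfubT := conv_fubini kE vE hkE hvE T
  have hgint : IntegrableOn
      (fun r => k0 * vE r + ∫ τ in Set.Ioo 0 r, vE τ * kE (r - τ)) (Set.Ioo 0 T) :=
    ((hvE.integrableOn).const_mul k0).add hfubT.2.1
  have hgbar : Integrable ((Set.Ioo 0 T).indicator
      (fun r => k0 * vE r + ∫ τ in Set.Ioo 0 r, vE τ * kE (r - τ))) :=
    (integrable_indicator_iff measurableSet_Ioo).mpr hgint
  filter_upwards [ae_restrict_of_ae (ae_hasDerivAt_primitive _ hgbar),
    ae_restrict_mem measurableSet_Ioo] with t hder ht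
  have hev : (fun y => ∫ x in (0:ℝ)..y, (Set.Ioo 0 T).indicator
        (fun r => k0 * vE r + ∫ τ in Set.Ioo 0 r, vE τ * kE (r - τ)) x)
      =ᶠ[nhds t] halfConv k v :=
    Filter.eventuallyEq_of_mem (isOpen_Ioo.mem_nhds ht) fun y hy =>
      (halfConv_eq_primitive T hT k kE k0 hkE hkftc vE hvE v hveq hy).symm
  have hD := HasDerivAt.congr_of_eventuallyEq hder hev.symm
  rw [hD.deriv, Set.indicator_of_mem ht, hveq _ ht]

lemma kftc (T : ℝ) (hT : 0 < T) (k k' : ℝ → ℝ)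
    (hk : ∀ t ∈ Set.Ioo 0 T, HasDerivAt k (k' t) t)
    (hk' : IntegrableOn k' (Set.Ioo 0 T)) :
    ∃ k0 : ℝ, ∀ s ∈ Set.Ioo 0 T,
      k s = k0 + ∫ σ in Set.Ioo 0 s, (Set.Ioo 0 T).indicator k' σ := by
  have hc : T / 2 ∈ Set.Ioo 0 T := ⟨by linarith, by linarith⟩
  have hii : ∀ s ∈ Set.Ioo 0 T, IntervalIntegrable k' volume 0 s := by
    intro s hs
    rw [intervalIntegrable_iff_integrableOn_Ioc_of_le hs.1.le]
    exact hk'.mono_set (fun x hx => ⟨hx.1, lt_of_le_of_lt hx.2 hs.2⟩)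
  have hiics : ∀ s ∈ Set.Ioo 0 T, IntervalIntegrable k' volume (T / 2) s := by
    intro s hs
    apply IntegrableOn.intervalIntegrable
    apply hk'.mono_set
    intro x hx
    rw [Set.uIcc_eq_union] at hx
    rcases hx with hx | hx
    · exact ⟨lt_of_lt_of_le hc.1 hx.1, lt_of_le_of_lt hx.2 hs.2⟩
    · exact ⟨lt_of_lt_of_le hs.1 hx.1, lt_of_le_of_lt hx.2 hc.2⟩
  have hftc : ∀ s ∈ Set.Ioo 0 T, (∫ x in (T / 2)..s, k' x) = k s - k (T / 2) := by
    intro s hs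
    apply intervalIntegral.integral_eq_sub_of_hasDerivAt
    · intro x hx
      apply hk
      rw [Set.uIcc_eq_union] at hx
      rcases hx with hx | hx
      · exact ⟨lt_of_lt_of_le hc.1 hx.1, lt_of_le_of_lt hx.2 hs.2⟩
      · exact ⟨lt_of_lt_of_le hs.1 hx.1, lt_of_le_of_lt hx.2 hc.2⟩
    · exact hiics s hs
  refine ⟨k (T / 2) - ∫ x in (0:ℝ)..(T / 2), k' x, ?_⟩
  intro s hs
  have hset : (∫ σ in Set.Ioo 0 s, (Set.Ioo 0 T).indicator k' σ) = ∫ x in (0:ℝ)..s, k' x := by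
    rw [intervalIntegral.integral_of_le hs.1.le, integral_Ioc_eq_integral_Ioo]
    apply setIntegral_congr_fun measurableSet_Ioo
    intro x hx
    have hxT : x ∈ Set.Ioo 0 T := ⟨hx.1, lt_trans hx.2 hs.2⟩
    exact Set.indicator_of_mem hxT k'
  rw [hset]
  have hadj : (∫ x in (0:ℝ)..(T / 2), k' x) + (∫ x in (T / 2)..s, k' x) = ∫ x in (0:ℝ)..s, k' x :=
    intervalIntegral.integral_add_adjacent_intervals (hii _ hc) (hiics s hs)
  have := hftc s hs
  linarith

theorem stmt_6 (T : ℝ) (hT : 0 < T) (k k' u H H' : ℝ → ℝ)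
    (hk : ∀ t ∈ Set.Ioo 0 T, HasDerivAt k (k' t) t)
    (hk' : IntegrableOn k' (Set.Ioo 0 T))
    (hkint : IntegrableOn k (Set.Ioo 0 T))
    (hH : ∀ y : ℝ, HasDerivAt H (H' y) y) (hHc : Continuous H')
    (hu : IntegrableOn u (Set.Ioo 0 T))
    (hHu : IntegrableOn (fun t => H (u t)) (Set.Ioo 0 T))
    (hHuu : IntegrableOn (fun t => H' (u t) * u t) (Set.Ioo 0 T))
    (hHuk : IntegrableOn (fun t => H' (u t) * halfConv k' u t) (Set.Ioo 0 T)) :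
    ∀ᵐ t ∂(volume.restrict (Set.Ioo 0 T)),
      H' (u t) * deriv (halfConv k u) t =
        deriv (halfConv k (fun τ => H (u τ))) t
        + (H' (u t) * u t - H (u t)) * k t
        + ∫ s in (0:ℝ)..t,
            (H (u (t - s)) - H (u t) - H' (u t) * (u (t - s) - u t)) * (-(k' s)) := by
  obtain ⟨k0, hkftc⟩ := kftc T hT k k' hk hk'
  have hkE : Integrable ((Set.Ioo 0 T).indicator k') :=
    (integrable_indicator_iff measurableSet_Ioo).mpr hk'
  have huE : Integrable ((Set.Ioo 0 T).indicator u) :=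
    (integrable_indicator_iff measurableSet_Ioo).mpr hu
  have hhE : Integrable ((Set.Ioo 0 T).indicator (fun τ => H (u τ))) :=
    (integrable_indicator_iff measurableSet_Ioo).mpr hHu
  have hD1 := halfConv_deriv_ae T hT k _ k0 hkE hkftc _ huE u
    (fun x hx => Set.indicator_of_mem hx u)
  have hD2 := halfConv_deriv_ae T hT k _ k0 hkE hkftc _ hhE (fun τ => H (u τ))
    (fun x hx => Set.indicator_of_mem hx _)
  have hS1 := (conv_fubini _ _ hkE huE T).2.2.1
  have hS2 := (conv_fubini _ _ hkE hhE T).2.2.1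
  filter_upwards [hD1, hD2, hS1, hS2, ae_restrict_mem measurableSet_Ioo]
    with t hd1 hd2 hs1 hs2 ht
  have hsub : Set.Ioo (0:ℝ) t ⊆ Set.Ioo 0 T := Set.Ioo_subset_Ioo le_rfl ht.2.le
  have htmem : ∀ τ ∈ Set.Ioo (0:ℝ) t, t - τ ∈ Set.Ioo 0 T := fun τ hτ =>
    ⟨by have := hτ.2; linarith, by have := hτ.1; have := ht.2; linarith⟩
  have hBint : IntegrableOn (fun τ => (Set.Ioo 0 T).indicator k' (t - τ)) (Set.Ioo 0 t) := by
    have h1 : IntervalIntegrable ((Set.Ioo 0 T).indicator k') volume t 0 :=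
      hkE.intervalIntegrable
    have h2 := h1.comp_sub_left t
    simp only [sub_self, sub_zero] at h2
    exact ((intervalIntegrable_iff_integrableOn_Ioc_of_le ht.1.le).mp h2).mono_set
      Set.Ioo_subset_Ioc_self
  have hrefl : (∫ τ in Set.Ioo 0 t, (Set.Ioo 0 T).indicator k' (t - τ)) = k t - k0 := by
    have h1 : (∫ τ in (0:ℝ)..t, (Set.Ioo 0 T).indicator k' (t - τ))
        = ∫ τ in (0:ℝ)..t, (Set.Ioo 0 T).indicator k' τ := by
      have := intervalIntegral.integral_comp_sub_left (a := (0:ℝ)) (b := t)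
        ((Set.Ioo 0 T).indicator k') t
      simpa using this
    have h2 : (∫ τ in Set.Ioo 0 t, (Set.Ioo 0 T).indicator k' (t - τ))
        = ∫ τ in (0:ℝ)..t, (Set.Ioo 0 T).indicator k' (t - τ) := by
      rw [intervalIntegral.integral_of_le ht.1.le, integral_Ioc_eq_integral_Ioo]
    have h3 : (∫ τ in (0:ℝ)..t, (Set.Ioo 0 T).indicator k' τ)
        = ∫ σ in Set.Ioo 0 t, (Set.Ioo 0 T).indicator k' σ := by
      rw [intervalIntegral.integral_of_le ht.1.le, integral_Ioc_eq_integral_Ioo]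
    have h4 := hkftc t ht
    rw [h2, h1, h3]
    linarith
  have hJ1 : (∫ s in (0:ℝ)..t,
        (H (u (t - s)) - H (u t) - H' (u t) * (u (t - s) - u t)) * (-(k' s)))
      = ∫ τ in (0:ℝ)..t, (H (u τ) - H (u t) - H' (u t) * (u τ - u t)) * (-(k' (t - τ))) := by
    have h := intervalIntegral.integral_comp_sub_left (a := (0:ℝ)) (b := t)
      (fun τ => (H (u τ) - H (u t) - H' (u t) * (u τ - u t)) * (-(k' (t - τ)))) t
    simp only [sub_self, sub_zero] at h
    rw [← h]
    congr 1
    funext s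
    rw [sub_sub_cancel]
  have hJ2 : (∫ τ in (0:ℝ)..t, (H (u τ) - H (u t) - H' (u t) * (u τ - u t)) * (-(k' (t - τ))))
      = ∫ τ in Set.Ioo 0 t,
          (-((Set.Ioo 0 T).indicator (fun τ => H (u τ)) τ * (Set.Ioo 0 T).indicator k' (t - τ))
           + (H' (u t) * ((Set.Ioo 0 T).indicator u τ * (Set.Ioo 0 T).indicator k' (t - τ))
           + (H (u t) - H' (u t) * u t) * (Set.Ioo 0 T).indicator k' (t - τ))) := by
    rw [intervalIntegral.integral_of_le ht.1.le, integral_Ioc_eq_integral_Ioo]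
    apply setIntegral_congr_fun measurableSet_Ioo
    intro τ hτ
    simp only [Set.indicator_of_mem (hsub hτ), Set.indicator_of_mem (htmem τ hτ)]
    ring
  have hIA : IntegrableOn
      (fun τ => -((Set.Ioo 0 T).indicator (fun τ => H (u τ)) τ
        * (Set.Ioo 0 T).indicator k' (t - τ))) (Set.Ioo 0 t) := hs2.neg
  have hIB : IntegrableOn
      (fun τ => H' (u t) * ((Set.Ioo 0 T).indicator u τ
        * (Set.Ioo 0 T).indicator k' (t - τ))) (Set.Ioo 0 t) := hs1.const_mul _
  have hIC : IntegrableOn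
      (fun τ => (H (u t) - H' (u t) * u t) * (Set.Ioo 0 T).indicator k' (t - τ))
      (Set.Ioo 0 t) := hBint.const_mul _
  have hadd1 : (∫ τ in Set.Ioo 0 t,
        (-((Set.Ioo 0 T).indicator (fun τ => H (u τ)) τ * (Set.Ioo 0 T).indicator k' (t - τ))
         + (H' (u t) * ((Set.Ioo 0 T).indicator u τ * (Set.Ioo 0 T).indicator k' (t - τ))
         + (H (u t) - H' (u t) * u t) * (Set.Ioo 0 T).indicator k' (t - τ))))
      = (∫ τ in Set.Ioo 0 t,
          -((Set.Ioo 0 T).indicator (fun τ => H (u τ)) τ * (Set.Ioo 0 T).indicator k' (t - τ)))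
        + ∫ τ in Set.Ioo 0 t,
            (H' (u t) * ((Set.Ioo 0 T).indicator u τ * (Set.Ioo 0 T).indicator k' (t - τ))
             + (H (u t) - H' (u t) * u t) * (Set.Ioo 0 T).indicator k' (t - τ)) :=
    MeasureTheory.integral_add hIA (hIB.add hIC)
  have hadd2 : (∫ τ in Set.Ioo 0 t,
        (H' (u t) * ((Set.Ioo 0 T).indicator u τ * (Set.Ioo 0 T).indicator k' (t - τ))
         + (H (u t) - H' (u t) * u t) * (Set.Ioo 0 T).indicator k' (t - τ)))
      = (∫ τ in Set.Ioo 0 t,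
          H' (u t) * ((Set.Ioo 0 T).indicator u τ * (Set.Ioo 0 T).indicator k' (t - τ)))
        + ∫ τ in Set.Ioo 0 t,
            (H (u t) - H' (u t) * u t) * (Set.Ioo 0 T).indicator k' (t - τ) :=
    MeasureTheory.integral_add hIB hIC
  have hneg : (∫ τ in Set.Ioo 0 t,
        -((Set.Ioo 0 T).indicator (fun τ => H (u τ)) τ * (Set.Ioo 0 T).indicator k' (t - τ)))
      = -(∫ τ in Set.Ioo 0 t,
          (Set.Ioo 0 T).indicator (fun τ => H (u τ)) τ * (Set.Ioo 0 T).indicator k' (t - τ)) :=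
    MeasureTheory.integral_neg _
  have hmulB : (∫ τ in Set.Ioo 0 t,
        H' (u t) * ((Set.Ioo 0 T).indicator u τ * (Set.Ioo 0 T).indicator k' (t - τ)))
      = H' (u t) * ∫ τ in Set.Ioo 0 t,
          (Set.Ioo 0 T).indicator u τ * (Set.Ioo 0 T).indicator k' (t - τ) :=
    MeasureTheory.integral_const_mul _ _
  have hmulC : (∫ τ in Set.Ioo 0 t,
        (H (u t) - H' (u t) * u t) * (Set.Ioo 0 T).indicator k' (t - τ))
      = (H (u t) - H' (u t) * u t) * ∫ τ in Set.Ioo 0 t,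
          (Set.Ioo 0 T).indicator k' (t - τ) :=
    MeasureTheory.integral_const_mul _ _
  rw [hd1, hd2, hJ1, hJ2, hadd1, hadd2, hneg, hmulB, hmulC, hrefl]
  ring
end

section
/- Let k ∈ W^{1,1}(0,T) be non-negative and non-increasing, H ∈ C¹(ℝ) convex, u₀ ∈ ℝ, and u ∈ L¹(0,T) with H(u), H'(u)u, H'(u)(k'*u) ∈ L¹(0,T). Then for almost all t ∈ (0,T): H'(u(t)) ∂_t(k*(u − u₀))(t) ≥ ∂_t(k*[H(u) − H(u₀)])(t). -/
open MeasureTheory intervalIntegral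

section aux

open Set Filter Metric Topology

lemma bregman_aux {H H' : ℝ → ℝ} (hH : ∀ y, HasDerivAt H (H' y) y)
    (hc : ConvexOn ℝ Set.univ H) (x y : ℝ) : H x + H' x * (y - x) ≤ H y := by
  rcases lt_trichotomy x y with h | h | h
  · have h2 := hc.le_slope_of_hasDerivAt (mem_univ x) (mem_univ y) h (hH x)
    rw [slope_def_field] at h2
    have h' : 0 < y - x := by linarith
    rw [le_div_iff₀ h'] at h2
    nlinarith
  · simp [h]
  · have h2 := hc.slope_le_of_hasDerivAt (mem_univ y) (mem_univ x) h (hH x)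
    rw [slope_def_field] at h2
    have h' : 0 < x - y := by linarith
    rw [div_le_iff₀ h'] at h2
    nlinarith

lemma ae_hasDerivAt_primitive_aux (g : ℝ → ℝ) (hg : Integrable g) :
    ∀ᵐ x, HasDerivAt (fun y => ∫ s in (0:ℝ)..y, g s) (g x) x := by
  filter_upwards [IsUnifLocDoublingMeasure.ae_tendsto_average_norm_sub (volume : Measure ℝ)
    (hg.locallyIntegrable) 1] with x hx
  have key : Tendsto (fun y => ⨍ z in closedBall x |y - x|, ‖g z - g x‖) (𝓝[≠] x) (𝓝 0) := by
    apply hx (fun _ => x) (fun y => |y - x|)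
    · rw [tendsto_nhdsWithin_iff]
      constructor
      · have h0 : Tendsto (fun y : ℝ => |y - x|) (𝓝 x) (𝓝 |x - x|) :=
          ((continuous_id.sub continuous_const).abs).tendsto x
        simpa using h0.mono_left nhdsWithin_le_nhds
      · filter_upwards [self_mem_nhdsWithin] with y hy
        exact abs_pos.2 (sub_ne_zero.2 hy)
    · filter_upwards with y
      simp only [one_mul]
      exact mem_closedBall_self (abs_nonneg _)
  rw [hasDerivAt_iff_tendsto_slope]
  rw [tendsto_iff_dist_tendsto_zero]
  apply squeeze_zero' (Eventually.of_forall fun y => dist_nonneg)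
    (g := fun y => 2 * ⨍ z in closedBall x |y - x|, ‖g z - g x‖)
  · filter_upwards [self_mem_nhdsWithin] with y (hy : y ≠ x)
    have hyx : (0:ℝ) < |y - x| := abs_pos.2 (sub_ne_zero.2 hy)
    have hball : Set.uIoc x y ⊆ closedBall x |y - x| := by
      rw [Real.closedBall_eq_Icc]
      intro z hz
      rcases hz with ⟨h1, h2⟩
      constructor
      · have : min x y ≥ x - |y - x| := by
          rcases le_total x y with h | h
          · simp only [min_eq_left h]; nlinarith [abs_nonneg (y - x)]
          · rw [min_eq_right h, abs_sub_comm, abs_of_nonneg (by linarith)]; linarith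
        linarith [h1]
      · have : max x y ≤ x + |y - x| := by
          rcases le_total x y with h | h
          · rw [max_eq_right h, abs_of_nonneg (by linarith)]; linarith
          · simp only [max_eq_left h]; nlinarith [abs_nonneg (y - x)]
        linarith [h2]
    have hInt : IntegrableOn (fun z => ‖g z - g x‖) (closedBall x |y - x|) :=
      (hg.integrableOn.sub ((integrableOn_const_iff).2
        (Or.inr measure_closedBall_lt_top))).norm
    have e1 : (∫ s in x..y, g s) - (y - x) * g x = ∫ s in x..y, (g s - g x) := by
      rw [intervalIntegral.integral_sub hg.intervalIntegrable
        (intervalIntegrable_const), intervalIntegral.integral_const, smul_eq_mul]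
    have e2 : dist (slope (fun y => ∫ s in (0:ℝ)..y, g s) x y) (g x)
        = |y - x|⁻¹ * |(∫ s in x..y, g s) - (y - x) * g x| := by
      rw [Real.dist_eq, slope_def_field]
      rw [show (∫ s in (0:ℝ)..y, g s) - (∫ s in (0:ℝ)..x, g s) = ∫ s in x..y, g s from
        intervalIntegral.integral_interval_sub_left hg.intervalIntegrable hg.intervalIntegrable]
      rw [show (∫ s in x..y, g s) / (y - x) - g x
          = ((∫ s in x..y, g s) - (y - x) * g x) / (y - x) by
        have hne : y - x ≠ 0 := sub_ne_zero.2 hy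
        field_simp]
      rw [abs_div, abs_sub_comm y x, div_eq_inv_mul]
    rw [e2, e1]
    have e3 : ‖∫ s in x..y, (g s - g x)‖ ≤ ∫ z in closedBall x |y - x|, ‖g z - g x‖ := by
      refine le_trans intervalIntegral.norm_integral_le_integral_norm_uIoc ?_
      exact setIntegral_mono_set hInt (Eventually.of_forall fun z => norm_nonneg _)
        (HasSubset.Subset.eventuallyLE hball)
    have e4 : (∫ z in closedBall x |y - x|, ‖g z - g x‖)
        = 2 * |y - x| * ⨍ z in closedBall x |y - x|, ‖g z - g x‖ := by
      rw [setAverage_eq, smul_eq_mul, Real.volume_real_closedBall (abs_nonneg _)]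
      field_simp
    rw [← Real.norm_eq_abs]
    calc |y - x|⁻¹ * ‖∫ s in x..y, (g s - g x)‖
        ≤ |y - x|⁻¹ * (2 * |y - x| * ⨍ z in closedBall x |y - x|, ‖g z - g x‖) := by
          rw [← e4]; exact mul_le_mul_of_nonneg_left e3 (by positivity)
      _ = 2 * ⨍ z in closedBall x |y - x|, ‖g z - g x‖ := by
          field_simp
  · simpa using key.const_mul 2

lemma conv_prod_integrable_aux {f g : ℝ → ℝ} (hf : Integrable f) (hg : Integrable g) :
    Integrable (fun p : ℝ × ℝ => f (p.1 - p.2) * g p.2)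
      ((volume : Measure ℝ).prod (volume : Measure ℝ)) := by
  have h : Integrable (fun z : ℝ × ℝ => f z.1 * g z.2)
      ((volume : Measure ℝ).prod volume) := hf.mul_prod hg
  have hmp : MeasurePreserving (fun z : ℝ × ℝ => (z.1 - z.2, z.2))
      ((volume : Measure ℝ).prod volume) ((volume : Measure ℝ).prod volume) :=
    measurePreserving_sub_prod volume volume
  exact (hmp.integrable_comp h.aestronglyMeasurable).2 h

lemma rep_lemma_aux (T t κ0 : ℝ) (k k' v : ℝ → ℝ) (ht : t ∈ Set.Ioo 0 T)
    (hK'int : Integrable ((Set.Ioo 0 T).indicator k'))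
    (hrep : ∀ x ∈ Set.Ioo 0 T, k x = κ0 + ∫ s in (0:ℝ)..x, (Set.Ioo 0 T).indicator k' s)
    (hv : Integrable ((Set.Ioo 0 T).indicator v))
    (hkv : IntegrableOn (fun τ => k (t - τ) * v τ) (Set.Ioo 0 t)) :
    halfConv k v t
      = ∫ s in (0:ℝ)..t, (κ0 * (Set.Ioo 0 T).indicator v s
          + ∫ τ, (Set.Ioo 0 T).indicator k' (s - τ) * (Set.Ioo 0 T).indicator v τ) := by
  set K' := (Set.Ioo 0 T).indicator k' with hK'def
  set V := (Set.Ioo 0 T).indicator v with hVdef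
  obtain ⟨ht0, htT⟩ := ht
  have hIooT : Set.Ioo 0 t ⊆ Set.Ioo 0 T := Set.Ioo_subset_Ioo le_rfl htT.le
  have hvT : IntegrableOn v (Set.Ioo 0 T) :=
    (integrable_indicator_iff measurableSet_Ioo).1 hv
  have hvt : IntegrableOn v (Set.Ioo 0 t) := hvT.mono_set hIooT
  set C : ℝ → ℝ := fun σ => ∫ τ, K' (σ - τ) * V τ with hCdef
  have hprod : Integrable (fun p : ℝ × ℝ => K' (p.1 - p.2) * V p.2)
      ((volume : Measure ℝ).prod volume) := conv_prod_integrable_aux hK'int hv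
  have hCint : Integrable C := hprod.integral_prod_left
  have Wzero : ∀ x : ℝ, x ≤ 0 → (∫ s in (0:ℝ)..x, K' s) = 0 := by
    intro x hx
    rw [intervalIntegral.integral_symm]
    have : EqOn K' (fun _ => (0:ℝ)) (Set.uIcc x 0) := by
      intro s hs
      rw [Set.uIcc_of_le hx] at hs
      exact Set.indicator_of_notMem (fun hmem => absurd hmem.1 (not_lt.2 hs.2)) _
    rw [intervalIntegral.integral_congr this]
    simp
  have fub : (∫ σ in (0:ℝ)..t, C σ)
      = (∫ τ in Set.Ioo 0 t, k (t - τ) * v τ) - κ0 * ∫ τ in Set.Ioo 0 t, v τ := by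
    have h1 : (∫ σ in (0:ℝ)..t, C σ) = ∫ σ in Set.Ioo 0 t, C σ := by
      rw [intervalIntegral.integral_of_le ht0.le, integral_Ioc_eq_integral_Ioo]
    have hres : Integrable (Function.uncurry fun σ τ => K' (σ - τ) * V τ)
        ((volume.restrict (Set.Ioo 0 t)).prod volume) := by
      rw [Measure.restrict_prod_eq_prod_univ]
      exact hprod.integrableOn (s := Set.Ioo 0 t ×ˢ Set.univ)
    have hswap : (∫ σ in Set.Ioo 0 t, C σ)
        = ∫ τ, ∫ σ in Set.Ioo 0 t, K' (σ - τ) * V τ ∂volume := by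
      exact MeasureTheory.integral_integral_swap hres
    have hinner : ∀ τ : ℝ, (∫ σ in Set.Ioo 0 t, K' (σ - τ) * V τ ∂volume)
        = ((∫ s in (0:ℝ)..(t - τ), K' s) - ∫ s in (0:ℝ)..(-τ), K' s) * V τ := by
      intro τ
      rw [MeasureTheory.integral_mul_const]
      congr 1
      rw [← integral_Ioc_eq_integral_Ioo, ← intervalIntegral.integral_of_le ht0.le]
      rw [intervalIntegral.integral_comp_sub_right (fun s => K' s) τ, zero_sub]
      exact (intervalIntegral.integral_interval_sub_left
        hK'int.intervalIntegrable hK'int.intervalIntegrable).symm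
    have hptwise : ∀ τ : ℝ,
        ((∫ s in (0:ℝ)..(t - τ), K' s) - ∫ s in (0:ℝ)..(-τ), K' s) * V τ
        = (Set.Ioo 0 t).indicator (fun τ => (k (t - τ) - κ0) * v τ) τ := by
      intro τ
      by_cases hτT : τ ∈ Set.Ioo 0 T
      · have hW2 : (∫ s in (0:ℝ)..(-τ), K' s) = 0 := Wzero _ (by linarith [hτT.1])
        have hVτ : V τ = v τ := Set.indicator_of_mem hτT _
        by_cases hτt : τ ∈ Set.Ioo 0 t
        · have htτ : t - τ ∈ Set.Ioo 0 T := ⟨by linarith [hτt.2], by linarith [hτT.1]⟩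
          have hx := hrep (t - τ) htτ
          rw [Set.indicator_of_mem hτt, hW2, hVτ]
          rw [show (∫ s in (0:ℝ)..(t - τ), K' s) = k (t - τ) - κ0 by
            rw [hK'def] at hx ⊢; linarith [hx]]
          ring
        · have hτt' : t ≤ τ := by
            by_contra hlt
            exact hτt ⟨hτT.1, not_le.1 hlt⟩
          have hW1 : (∫ s in (0:ℝ)..(t - τ), K' s) = 0 := Wzero _ (by linarith)
          rw [Set.indicator_of_notMem hτt, hW1, hW2]
          ring
      · have hVτ : V τ = 0 := Set.indicator_of_notMem hτT _
        have hτt : τ ∉ Set.Ioo 0 t := fun h => hτT (hIooT h)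
        rw [Set.indicator_of_notMem hτt, hVτ, mul_zero]
    calc (∫ σ in (0:ℝ)..t, C σ)
        = ∫ τ, ∫ σ in Set.Ioo 0 t, K' (σ - τ) * V τ ∂volume := by rw [h1, hswap]
      _ = ∫ τ, (Set.Ioo 0 t).indicator (fun τ => (k (t - τ) - κ0) * v τ) τ := by
          congr 1; funext τ; rw [hinner τ, hptwise τ]
      _ = ∫ τ in Set.Ioo 0 t, (k (t - τ) - κ0) * v τ := by
          rw [MeasureTheory.integral_indicator measurableSet_Ioo]
      _ = (∫ τ in Set.Ioo 0 t, k (t - τ) * v τ) - κ0 * ∫ τ in Set.Ioo 0 t, v τ := by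
          rw [show (fun τ => (k (t - τ) - κ0) * v τ)
              = fun τ => k (t - τ) * v τ - κ0 * v τ by funext τ; ring]
          rw [MeasureTheory.integral_sub hkv (hvt.const_mul κ0),
            MeasureTheory.integral_const_mul]
  have hVint : (∫ s in (0:ℝ)..t, V s) = ∫ τ in Set.Ioo 0 t, v τ := by
    rw [intervalIntegral.integral_of_le ht0.le, integral_Ioc_eq_integral_Ioo]
    exact setIntegral_congr_fun measurableSet_Ioo fun τ hτ =>
      Set.indicator_of_mem (hIooT hτ) _
  have hsplit : (∫ s in (0:ℝ)..t, (κ0 * V s + C s))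
      = κ0 * (∫ s in (0:ℝ)..t, V s) + ∫ s in (0:ℝ)..t, C s := by
    rw [intervalIntegral.integral_add (hv.intervalIntegrable.const_mul κ0)
      hCint.intervalIntegrable, intervalIntegral.integral_const_mul]
  have hhc : halfConv k v t = ∫ τ in Set.Ioo 0 t, k (t - τ) * v τ := by
    rw [halfConv, intervalIntegral.integral_of_le ht0.le, integral_Ioc_eq_integral_Ioo]
  rw [hsplit, hVint, fub, hhc]
  ring

end aux

theorem stmt_7 (T : ℝ) (hT : 0 < T) (k k' u H H' : ℝ → ℝ) (u₀ : ℝ)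
    (hk : ∀ t ∈ Set.Ioo 0 T, HasDerivAt k (k' t) t)
    (hk'int : IntegrableOn k' (Set.Ioo 0 T))
    (hkint : IntegrableOn k (Set.Ioo 0 T))
    (hknonneg : ∀ t ∈ Set.Ioo 0 T, 0 ≤ k t)
    (hkmono : ∀ s ∈ Set.Ioo 0 T, ∀ t ∈ Set.Ioo 0 T, s ≤ t → k t ≤ k s)
    (hH : ∀ y : ℝ, HasDerivAt H (H' y) y) (hHc : Continuous H')
    (hHconv : ConvexOn ℝ Set.univ H)
    (hu : IntegrableOn u (Set.Ioo 0 T))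
    (hHu : IntegrableOn (fun t => H (u t)) (Set.Ioo 0 T))
    (hHuu : IntegrableOn (fun t => H' (u t) * u t) (Set.Ioo 0 T))
    (hHuk : IntegrableOn (fun t => H' (u t) * halfConv k' u t) (Set.Ioo 0 T)) :
    ∀ᵐ t ∂(volume.restrict (Set.Ioo 0 T)),
      H' (u t) * deriv (halfConv k (fun τ => u τ - u₀)) t ≥
        deriv (halfConv k (fun τ => H (u τ) - H u₀)) t := by
  have hIoo : MeasurableSet (Set.Ioo (0:ℝ) T) := measurableSet_Ioo
  have hfin : volume (Set.Ioo (0:ℝ) T) < ⊤ := by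
    rw [Real.volume_Ioo]; exact ENNReal.ofReal_lt_top
  -- k' is nonpositive on (0,T)
  have hk'le : ∀ x ∈ Set.Ioo 0 T, k' x ≤ 0 := by
    intro x hx
    have hten : Filter.Tendsto (slope k x) (nhdsWithin x (Set.Ioi x)) (nhds (k' x)) :=
      (hasDerivAt_iff_tendsto_slope.1 (hk x hx)).mono_left
        (nhdsWithin_mono x fun y hy => ne_of_gt hy)
    refine le_of_tendsto hten ?_
    filter_upwards [Ioo_mem_nhdsGT_of_mem ⟨le_refl x, hx.2⟩] with y hy
    have hyIoo : y ∈ Set.Ioo 0 T := ⟨lt_trans hx.1 hy.1, hy.2⟩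
    have hky : k y ≤ k x := hkmono x hx y hyIoo hy.1.le
    rw [slope_def_field]
    apply div_nonpos_of_nonpos_of_nonneg <;> linarith [hy.1]
  set K' := (Set.Ioo 0 T).indicator k' with hK'def
  have hK'int : Integrable K' := (integrable_indicator_iff hIoo).2 hk'int
  have hK'le : ∀ s, K' s ≤ 0 := by
    intro s; by_cases h : s ∈ Set.Ioo 0 T
    · rw [hK'def, Set.indicator_of_mem h]; exact hk'le s h
    · rw [hK'def, Set.indicator_of_notMem h]
  have hc : T / 2 ∈ Set.Ioo 0 T := ⟨by linarith, by linarith⟩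
  set κ0 : ℝ := k (T / 2) - ∫ s in (0:ℝ)..(T / 2), K' s with hκdef
  have hrep : ∀ x ∈ Set.Ioo 0 T, k x = κ0 + ∫ s in (0:ℝ)..x, K' s := by
    intro x hx
    have hsub : Set.uIcc x (T / 2) ⊆ Set.Ioo 0 T := by
      intro s hs
      rw [Set.mem_uIcc] at hs
      rcases hs with ⟨h1, h2⟩ | ⟨h1, h2⟩
      · exact ⟨lt_of_lt_of_le hx.1 h1, lt_of_le_of_lt h2 hc.2⟩
      · exact ⟨lt_of_lt_of_le hc.1 h1, lt_of_le_of_lt h2 hx.2⟩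
    have hfund : (∫ s in x..(T / 2), k' s) = k (T / 2) - k x := by
      apply intervalIntegral.integral_eq_sub_of_hasDerivAt
      · exact fun s hs => hk s (hsub hs)
      · exact (hk'int.mono_set hsub).intervalIntegrable
    have hcongr : (∫ s in x..(T / 2), k' s) = ∫ s in x..(T / 2), K' s :=
      (intervalIntegral.integral_congr fun s hs =>
        (Set.indicator_of_mem (hsub hs) k').symm)
    have hadd : (∫ s in (0:ℝ)..x, K' s) + (∫ s in x..(T / 2), K' s)
        = ∫ s in (0:ℝ)..(T / 2), K' s :=
      intervalIntegral.integral_add_adjacent_intervals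
        hK'int.intervalIntegrable hK'int.intervalIntegrable
    rw [hcongr] at hfund
    rw [hκdef]
    linarith
  have hW : ∀ x : ℝ, 0 ≤ x → (∫ s in (0:ℝ)..x, K' s) ≤ 0 := by
    intro x hx
    have hmono : (∫ s in (0:ℝ)..x, K' s) ≤ ∫ s in (0:ℝ)..x, (0:ℝ) := by
      apply intervalIntegral.integral_mono_on hx hK'int.intervalIntegrable
        intervalIntegrable_const
      exact fun s _ => hK'le s
    simpa using hmono
  have hkle : ∀ x ∈ Set.Ioo 0 T, k x ≤ κ0 := by
    intro x hx
    have := hrep x hx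
    linarith [hW x hx.1.le]
  have hκpos : 0 ≤ κ0 := le_trans (hknonneg _ hc) (hkle _ hc)
  -- integrabilities of the two v's
  have hv1 : IntegrableOn (fun τ => u τ - u₀) (Set.Ioo 0 T) :=
    hu.sub ((integrableOn_const_iff).2 (Or.inr hfin))
  have hv2 : IntegrableOn (fun τ => H (u τ) - H u₀) (Set.Ioo 0 T) :=
    hHu.sub ((integrableOn_const_iff).2 (Or.inr hfin))
  set V₁ := (Set.Ioo 0 T).indicator (fun τ => u τ - u₀) with hV1def
  set V₂ := (Set.Ioo 0 T).indicator (fun τ => H (u τ) - H u₀) with hV2def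
  have hV1 : Integrable V₁ := (integrable_indicator_iff hIoo).2 hv1
  have hV2 : Integrable V₂ := (integrable_indicator_iff hIoo).2 hv2
  have hkcont : ContinuousOn k (Set.Ioo 0 T) :=
    fun x hx => (hk x hx).continuousAt.continuousWithinAt
  have hkv : ∀ (v : ℝ → ℝ), IntegrableOn v (Set.Ioo 0 T) → ∀ t ∈ Set.Ioo 0 T,
      IntegrableOn (fun τ => k (t - τ) * v τ) (Set.Ioo 0 t) := by
    intro v hv t ht
    have hsub : Set.Ioo 0 t ⊆ Set.Ioo 0 T := Set.Ioo_subset_Ioo le_rfl ht.2.le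
    have hvt : IntegrableOn v (Set.Ioo 0 t) := hv.mono_set hsub
    have hmaps : Set.MapsTo (fun τ => t - τ) (Set.Ioo 0 t) (Set.Ioo 0 T) := by
      intro τ hτ
      show t - τ ∈ Set.Ioo 0 T
      exact ⟨by linarith [hτ.2], by linarith [hτ.1, ht.2]⟩
    have hmeas : AEStronglyMeasurable (fun τ => k (t - τ))
        (volume.restrict (Set.Ioo 0 t)) :=
      (hkcont.comp ((continuous_const.sub continuous_id).continuousOn)
        hmaps).aestronglyMeasurable measurableSet_Ioo
    apply Integrable.mono' (hvt.norm.const_mul κ0) (hmeas.mul hvt.aestronglyMeasurable)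
    filter_upwards [ae_restrict_mem measurableSet_Ioo] with τ hτ
    have h1 : 0 ≤ k (t - τ) := hknonneg _ (hmaps hτ)
    have h2 : k (t - τ) ≤ κ0 := hkle _ (hmaps hτ)
    simp only [Pi.mul_apply, norm_mul]
    calc ‖k (t - τ)‖ * ‖v τ‖ = k (t - τ) * ‖v τ‖ := by
          rw [Real.norm_eq_abs, abs_of_nonneg h1]
      _ ≤ κ0 * ‖v τ‖ := mul_le_mul_of_nonneg_right h2 (norm_nonneg _)
  -- convolution pieces
  have hprod1 := conv_prod_integrable_aux hK'int hV1
  have hprod2 := conv_prod_integrable_aux hK'int hV2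
  set C₁ : ℝ → ℝ := fun σ => ∫ τ, K' (σ - τ) * V₁ τ with hC1def
  set C₂ : ℝ → ℝ := fun σ => ∫ τ, K' (σ - τ) * V₂ τ with hC2def
  have hC1int : Integrable C₁ := hprod1.integral_prod_left
  have hC2int : Integrable C₂ := hprod2.integral_prod_left
  set g₁ : ℝ → ℝ := fun s => κ0 * V₁ s + C₁ s with hg1def
  set g₂ : ℝ → ℝ := fun s => κ0 * V₂ s + C₂ s with hg2def
  have hg1int : Integrable g₁ := (hV1.const_mul κ0).add hC1int
  have hg2int : Integrable g₂ := (hV2.const_mul κ0).add hC2int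
  have heqfun1 : ∀ x ∈ Set.Ioo 0 T,
      halfConv k (fun τ => u τ - u₀) x = ∫ s in (0:ℝ)..x, g₁ s :=
    fun x hx => rep_lemma_aux T x κ0 k k' _ hx hK'int hrep hV1 (hkv _ hv1 x hx)
  have heqfun2 : ∀ x ∈ Set.Ioo 0 T,
      halfConv k (fun τ => H (u τ) - H u₀) x = ∫ s in (0:ℝ)..x, g₂ s :=
    fun x hx => rep_lemma_aux T x κ0 k k' _ hx hK'int hrep hV2 (hkv _ hv2 x hx)
  filter_upwards [ae_restrict_mem hIoo,
    ae_restrict_of_ae (ae_hasDerivAt_primitive_aux g₁ hg1int),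
    ae_restrict_of_ae (ae_hasDerivAt_primitive_aux g₂ hg2int),
    ae_restrict_of_ae hprod1.prod_right_ae,
    ae_restrict_of_ae hprod2.prod_right_ae] with t ht hftc1 hftc2 hs1 hs2
  -- compute the derivatives
  have hd1 : deriv (halfConv k (fun τ => u τ - u₀)) t = g₁ t := by
    have heq : (halfConv k (fun τ => u τ - u₀))
        =ᶠ[nhds t] fun y => ∫ s in (0:ℝ)..y, g₁ s := by
      filter_upwards [isOpen_Ioo.mem_nhds ht] with x hx using heqfun1 x hx
    rw [heq.deriv_eq, hftc1.deriv]
  have hd2 : deriv (halfConv k (fun τ => H (u τ) - H u₀)) t = g₂ t := by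
    have heq : (halfConv k (fun τ => H (u τ) - H u₀))
        =ᶠ[nhds t] fun y => ∫ s in (0:ℝ)..y, g₂ s := by
      filter_upwards [isOpen_Ioo.mem_nhds ht] with x hx using heqfun2 x hx
    rw [heq.deriv_eq, hftc2.deriv]
  rw [ge_iff_le, hd1, hd2]
  show κ0 * V₂ t + C₂ t ≤ H' (u t) * (κ0 * V₁ t + C₁ t)
  -- pointwise inequality
  have hs1' : Integrable (fun τ => K' (t - τ) * V₁ τ) := hs1
  have hs2' : Integrable (fun τ => K' (t - τ) * V₂ τ) := hs2
  have hV1t : V₁ t = u t - u₀ := Set.indicator_of_mem ht _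
  have hV2t : V₂ t = H (u t) - H u₀ := Set.indicator_of_mem ht _
  set c : ℝ := H' (u t) with hcdef
  set Cst : ℝ := c * (u t - u₀) - (H (u t) - H u₀) with hCstdef
  have hCst : 0 ≤ Cst := by
    have hb := bregman_aux hH hHconv (u t) u₀
    rw [hCstdef, hcdef]; linarith
  set φ : ℝ → ℝ :=
    (Set.Ioo 0 T).indicator (fun τ => c * (u τ - u t) - H (u τ) + H (u t)) with hφdef
  have hφle : ∀ τ, φ τ ≤ 0 := by
    intro τ
    by_cases h : τ ∈ Set.Ioo 0 T
    · rw [hφdef, Set.indicator_of_mem h]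
      have hb := bregman_aux hH hHconv (u t) (u τ)
      rw [hcdef]; linarith
    · rw [hφdef, Set.indicator_of_notMem h]
  have key1 : ∀ τ, c * V₁ τ - V₂ τ
      = φ τ + Cst * (Set.Ioo 0 T).indicator (fun _ => (1:ℝ)) τ := by
    intro τ
    by_cases h : τ ∈ Set.Ioo 0 T
    · rw [hφdef, hV1def, hV2def, Set.indicator_of_mem h, Set.indicator_of_mem h,
        Set.indicator_of_mem h, Set.indicator_of_mem h, hCstdef]
      ring
    · rw [hφdef, hV1def, hV2def, Set.indicator_of_notMem h, Set.indicator_of_notMem h,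
        Set.indicator_of_notMem h, Set.indicator_of_notMem h]
      ring
  have hK'comp : Integrable (fun τ => K' (t - τ)) := by
    have hmp : MeasurePreserving (fun τ : ℝ => t - τ) volume volume :=
      Measure.measurePreserving_sub_left volume t
    exact (hmp.integrable_comp hK'int.aestronglyMeasurable).2 hK'int
  have hindeq : (fun τ => K' (t - τ) * (Cst * (Set.Ioo 0 T).indicator (fun _ => (1:ℝ)) τ))
      = fun τ => Cst * (Set.Ioo 0 t).indicator (fun τ => K' (t - τ)) τ := by
    funext τ
    by_cases h : τ ∈ Set.Ioo 0 t
    · have hT' : τ ∈ Set.Ioo 0 T := ⟨h.1, lt_trans h.2 ht.2⟩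
      rw [Set.indicator_of_mem h, Set.indicator_of_mem hT']
      ring
    · rw [Set.indicator_of_notMem h]
      by_cases hT' : τ ∈ Set.Ioo 0 T
      · have hτt : t ≤ τ := by
          by_contra hlt
          exact h ⟨hT'.1, not_le.1 hlt⟩
        have : K' (t - τ) = 0 := by
          rw [hK'def]
          exact Set.indicator_of_notMem (fun hm => absurd hm.1 (by linarith)) _
        rw [this, Set.indicator_of_mem hT']
        ring
      · rw [Set.indicator_of_notMem hT']
        ring
  have I1 : Integrable
      (fun τ => K' (t - τ) * (Cst * (Set.Ioo 0 T).indicator (fun _ => (1:ℝ)) τ)) := by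
    rw [hindeq]
    exact ((integrable_indicator_iff measurableSet_Ioo).2 hK'comp.integrableOn).const_mul Cst
  have I0 : Integrable (fun τ => K' (t - τ) * (c * V₁ τ - V₂ τ)) := by
    have hrw : (fun τ => K' (t - τ) * (c * V₁ τ - V₂ τ))
        = fun τ => c * (K' (t - τ) * V₁ τ) - K' (t - τ) * V₂ τ := by
      funext τ; ring
    rw [hrw]
    exact (hs1'.const_mul c).sub hs2'
  have Iφ : Integrable (fun τ => K' (t - τ) * φ τ) := by
    have hrw : (fun τ => K' (t - τ) * φ τ)
        = fun τ => K' (t - τ) * (c * V₁ τ - V₂ τ)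
          - K' (t - τ) * (Cst * (Set.Ioo 0 T).indicator (fun _ => (1:ℝ)) τ) := by
      funext τ
      have hkey := key1 τ
      rw [show φ τ = c * V₁ τ - V₂ τ
          - Cst * (Set.Ioo 0 T).indicator (fun _ => (1:ℝ)) τ by linarith]
      ring
    rw [hrw]
    exact I0.sub I1
  have E1 : c * C₁ t - C₂ t = ∫ τ, K' (t - τ) * (c * V₁ τ - V₂ τ) := by
    have h1 : c * C₁ t = ∫ τ, c * (K' (t - τ) * V₁ τ) := by
      rw [hC1def, MeasureTheory.integral_const_mul]
    rw [h1, hC2def, ← MeasureTheory.integral_sub (hs1'.const_mul c) hs2']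
    congr 1; funext τ; ring
  have E2 : (∫ τ, K' (t - τ) * (c * V₁ τ - V₂ τ))
      = (∫ τ, K' (t - τ) * φ τ)
        + ∫ τ, K' (t - τ) * (Cst * (Set.Ioo 0 T).indicator (fun _ => (1:ℝ)) τ) := by
    rw [← MeasureTheory.integral_add Iφ I1]
    congr 1; funext τ
    have hkey := key1 τ
    rw [show c * V₁ τ - V₂ τ = φ τ
        + Cst * (Set.Ioo 0 T).indicator (fun _ => (1:ℝ)) τ from hkey]
    ring
  have E3 : 0 ≤ ∫ τ, K' (t - τ) * φ τ :=
    MeasureTheory.integral_nonneg fun τ =>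
      mul_nonneg_of_nonpos_of_nonpos (hK'le _) (hφle τ)
  have E4 : (∫ τ, K' (t - τ) * (Cst * (Set.Ioo 0 T).indicator (fun _ => (1:ℝ)) τ))
      = Cst * (k t - κ0) := by
    rw [hindeq, MeasureTheory.integral_const_mul,
      MeasureTheory.integral_indicator measurableSet_Ioo]
    have hJ : (∫ τ in Set.Ioo 0 t, K' (t - τ)) = k t - κ0 := by
      rw [← integral_Ioc_eq_integral_Ioo, ← intervalIntegral.integral_of_le ht.1.le,
        intervalIntegral.integral_comp_sub_left (fun s => K' s) t]
      simp only [sub_self, sub_zero]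
      linarith [hrep t ht]
    rw [hJ]
  have hkt : 0 ≤ k t := hknonneg t ht
  have expand : c * (κ0 * V₁ t + C₁ t) - (κ0 * V₂ t + C₂ t)
      = κ0 * Cst + (c * C₁ t - C₂ t) := by
    rw [hV1t, hV2t, hCstdef]; ring
  have hexp2 : Cst * (k t - κ0) = Cst * k t - Cst * κ0 := by ring
  have hcomm : κ0 * Cst = Cst * κ0 := mul_comm _ _
  nlinarith [mul_nonneg hCst hkt]
end
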